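/- Let G : Δ_S → ℝ be differentiable and concave, r ∈ ℝ^{S×A}, and F(μ) = ⟨μ, r⟩ + G(ρ) where ρ is the state marginal of μ. Define the separable MFG reward R(s,a,ρ) = r(s,a) + ∇G(ρ)(s). Then a policy π maximizes F(μ_π) over all policies if and only if π is a Nash equilibrium of the MFG, i.e., J(π', ρ_π) ≤ J(π, ρ_π) for all policies π', where J(π', ρ) = ⟨μ_{π'}, R(·,·,ρ)⟩. -/

import Mathlib

noncomputable section
open scoped BigOperators

def IsDist {X : Type*} [Fintype X] (p : X → ℝ) : Prop :=
  (∀ x, 0 ≤ p x) ∧ ∑ x, p x = 1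

def IsPolicy {S A : Type*} [Fintype A] (π : S → A → ℝ) : Prop :=
  ∀ s, IsDist (π s)

def IsKernel {S A : Type*} [Fintype S] (P : S → A → S → ℝ) : Prop :=
  ∀ s a, IsDist (P s a)

/-- Probability of (S_t = s, A_t = a) under policy `π`, kernel `P`, initial law `ρ0`. -/
def saDist {S A : Type*} [Fintype S] [Fintype A] (P : S → A → S → ℝ) (π : S → A → ℝ)
    (ρ0 : S → ℝ) : ℕ → S → A → ℝ
  | 0 => fun s a => ρ0 s * π s a
  | (t + 1) => fun s a => π s a * ∑ s' : S, ∑ a' : A, P s' a' s * saDist P π ρ0 t s' a'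

/-- Discounted state-action occupancy measure of policy `π`. -/
def occ {S A : Type*} [Fintype S] [Fintype A] (γ : ℝ) (P : S → A → S → ℝ)
    (π : S → A → ℝ) (ρ0 : S → ℝ) (s : S) (a : A) : ℝ :=
  (1 - γ) * ∑' t : ℕ, γ ^ t * saDist P π ρ0 t s a

/-- The Bellman flow constraint set `M`. -/
def InFlow {S A : Type*} [Fintype S] [Fintype A] (γ : ℝ) (P : S → A → S → ℝ)
    (ρ0 : S → ℝ) (μ : S → A → ℝ) : Prop :=
  IsDist (fun p : S × A => μ p.1 p.2) ∧
  ∀ s, ∑ a, μ s a = (1 - γ) * ρ0 s + γ * ∑ s' : S, ∑ a' : A, P s' a' s * μ s' a'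

open scoped RealInnerProductSpace

/-- The occupancy measure of `π` viewed as a point of Euclidean space `ℝ^{S×A}`. -/
def occE {S A : Type*} [Fintype S] [Fintype A] (γ : ℝ) (P : S → A → S → ℝ)
    (π : S → A → ℝ) (ρ0 : S → ℝ) : EuclideanSpace ℝ (S × A) :=
  WithLp.toLp 2 (fun p : S × A => occ γ P π ρ0 p.1 p.2)

/-- The Bellman flow polytope `M` inside Euclidean space `ℝ^{S×A}`. -/
def MflowE {S A : Type*} [Fintype S] [Fintype A] (γ : ℝ) (P : S → A → S → ℝ)
    (ρ0 : S → ℝ) : Set (EuclideanSpace ℝ (S × A)) :=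
  {μ | (∀ p, 0 ≤ μ p) ∧ (∑ p : S × A, μ p = 1) ∧
    ∀ s, ∑ a, μ (s, a) = (1 - γ) * ρ0 s + γ * ∑ s' : S, ∑ a' : A, P s' a' s * μ (s', a')}

/-- The state marginal `ρ(s) = ∑_a μ(s,a)` of a state-action vector. -/
def margE {S A : Type*} [Fintype S] [Fintype A] (μ : EuclideanSpace ℝ (S × A)) :
    EuclideanSpace ℝ S :=
  WithLp.toLp 2 (fun s => ∑ a : A, μ (s, a))

section Lemmas
variable {S A : Type*} [Fintype S] [Fintype A]

lemma saDist_nonneg {P : S → A → S → ℝ} {π : S → A → ℝ} {ρ0 : S → ℝ}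
    (hP : IsKernel P) (hπ : IsPolicy π) (hρ0 : ∀ s, 0 ≤ ρ0 s) :
    ∀ t s a, 0 ≤ saDist P π ρ0 t s a := by
  intro t
  induction t with
  | zero => intro s a; exact mul_nonneg (hρ0 s) ((hπ s).1 a)
  | succ t ih =>
    intro s a
    refine mul_nonneg ((hπ s).1 a) ?_
    refine Finset.sum_nonneg fun s' _ => Finset.sum_nonneg fun a' _ => ?_
    exact mul_nonneg ((hP s' a').1 s) (ih s' a')

lemma saDist_marg_succ {P : S → A → S → ℝ} {π : S → A → ℝ} {ρ0 : S → ℝ}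
    (hπ : IsPolicy π) (t : ℕ) (s : S) :
    ∑ a, saDist P π ρ0 (t + 1) s a
      = ∑ s' : S, ∑ a' : A, P s' a' s * saDist P π ρ0 t s' a' := by
  simp only [saDist, ← Finset.sum_mul, (hπ s).2, one_mul]

lemma saDist_total {P : S → A → S → ℝ} {π : S → A → ℝ} {ρ0 : S → ℝ}
    (hP : IsKernel P) (hπ : IsPolicy π) (hρ0 : IsDist ρ0) :
    ∀ t, ∑ s : S, ∑ a : A, saDist P π ρ0 t s a = 1 := by
  intro t
  induction t with
  | zero =>
    simp only [saDist, ← Finset.mul_sum]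
    calc ∑ s : S, ρ0 s * ∑ a, π s a = ∑ s : S, ρ0 s := by
          refine Finset.sum_congr rfl fun s _ => by rw [(hπ s).2, mul_one]
      _ = 1 := hρ0.2
  | succ t ih =>
    calc ∑ s : S, ∑ a, saDist P π ρ0 (t+1) s a
        = ∑ s : S, ∑ s' : S, ∑ a' : A, P s' a' s * saDist P π ρ0 t s' a' := by
          refine Finset.sum_congr rfl fun s _ => saDist_marg_succ hπ t s
      _ = ∑ s' : S, ∑ a' : A, (∑ s : S, P s' a' s) * saDist P π ρ0 t s' a' := by
          rw [Finset.sum_comm]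
          refine Finset.sum_congr rfl fun s' _ => ?_
          rw [Finset.sum_comm]
          refine Finset.sum_congr rfl fun a' _ => ?_
          rw [Finset.sum_mul]
      _ = ∑ s' : S, ∑ a' : A, saDist P π ρ0 t s' a' := by
          refine Finset.sum_congr rfl fun s' _ => Finset.sum_congr rfl fun a' _ => ?_
          rw [(hP s' a').2, one_mul]
      _ = 1 := ih

lemma saDist_le_one {P : S → A → S → ℝ} {π : S → A → ℝ} {ρ0 : S → ℝ}
    (hP : IsKernel P) (hπ : IsPolicy π) (hρ0 : IsDist ρ0) (t : ℕ) (s : S) (a : A) :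
    saDist P π ρ0 t s a ≤ 1 := by
  have h : ∑ p : S × A, saDist P π ρ0 t p.1 p.2 = 1 := by
    rw [Fintype.sum_prod_type]; exact saDist_total hP hπ hρ0 t
  calc saDist P π ρ0 t s a
      ≤ ∑ p : S × A, saDist P π ρ0 t p.1 p.2 := by
        exact Finset.single_le_sum (f := fun p : S × A => saDist P π ρ0 t p.1 p.2)
          (fun p _ => saDist_nonneg hP hπ hρ0.1 t p.1 p.2) (Finset.mem_univ (s, a))
    _ = 1 := h

lemma saDist_summable {γ : ℝ} (hγ : γ ∈ Set.Ioo (0:ℝ) 1) {P : S → A → S → ℝ}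
    {π : S → A → ℝ} {ρ0 : S → ℝ} (hP : IsKernel P) (hπ : IsPolicy π) (hρ0 : IsDist ρ0)
    (s : S) (a : A) : Summable (fun t => γ ^ t * saDist P π ρ0 t s a) := by
  refine Summable.of_nonneg_of_le
    (fun t => mul_nonneg (pow_nonneg hγ.1.le t) (saDist_nonneg hP hπ hρ0.1 t s a))
    (fun t => ?_) (summable_geometric_of_lt_one hγ.1.le hγ.2)
  calc γ ^ t * saDist P π ρ0 t s a ≤ γ ^ t * 1 := by
        exact mul_le_mul_of_nonneg_left (saDist_le_one hP hπ hρ0 t s a) (pow_nonneg hγ.1.le t)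
    _ = γ ^ t := mul_one _

lemma occ_nonneg {γ : ℝ} (hγ : γ ∈ Set.Ioo (0:ℝ) 1) {P : S → A → S → ℝ}
    {π : S → A → ℝ} {ρ0 : S → ℝ} (hP : IsKernel P) (hπ : IsPolicy π) (hρ0 : IsDist ρ0)
    (s : S) (a : A) : 0 ≤ occ γ P π ρ0 s a := by
  refine mul_nonneg (by linarith [hγ.2]) (tsum_nonneg fun t => ?_)
  exact mul_nonneg (pow_nonneg hγ.1.le t) (saDist_nonneg hP hπ hρ0.1 t s a)

lemma occ_factor {γ : ℝ} (hγ : γ ∈ Set.Ioo (0:ℝ) 1) {P : S → A → S → ℝ}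
    {π : S → A → ℝ} {ρ0 : S → ℝ} (hP : IsKernel P) (hπ : IsPolicy π) (hρ0 : IsDist ρ0)
    (s : S) (a : A) : occ γ P π ρ0 s a = π s a * ∑ b, occ γ P π ρ0 s b := by
  have hfac : ∀ t, saDist P π ρ0 t s a = π s a * ∑ b, saDist P π ρ0 t s b := by
    intro t
    cases t with
    | zero => simp only [saDist, ← Finset.mul_sum, (hπ s).2, mul_one]; ring
    | succ t => simp only [saDist, ← Finset.sum_mul, (hπ s).2, one_mul]
  have hsum : ∀ b, Summable (fun t => γ ^ t * saDist P π ρ0 t s b) :=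
    fun b => saDist_summable hγ hP hπ hρ0 s b
  unfold occ
  rw [show (∑ b, (1 - γ) * ∑' t : ℕ, γ ^ t * saDist P π ρ0 t s b)
      = (1 - γ) * ∑' t : ℕ, ∑ b, γ ^ t * saDist P π ρ0 t s b by
    rw [← Finset.mul_sum, Summable.tsum_finsetSum (fun b _ => hsum b)]]
  rw [← mul_assoc, mul_comm (π s a) (1 - γ), mul_assoc]
  congr 1
  rw [← tsum_mul_left]
  refine tsum_congr fun t => ?_
  rw [hfac t]
  simp only [Finset.mul_sum]
  exact Finset.sum_congr rfl fun b _ => by ring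

lemma occ_total {γ : ℝ} (hγ : γ ∈ Set.Ioo (0:ℝ) 1) {P : S → A → S → ℝ}
    {π : S → A → ℝ} {ρ0 : S → ℝ} (hP : IsKernel P) (hπ : IsPolicy π) (hρ0 : IsDist ρ0) :
    ∑ s : S, ∑ a : A, occ γ P π ρ0 s a = 1 := by
  have hsum : ∀ s a, Summable (fun t => γ ^ t * saDist P π ρ0 t s a) :=
    fun s a => saDist_summable hγ hP hπ hρ0 s a
  have hA : ∀ s : S, (∑ a : A, ∑' t : ℕ, γ ^ t * saDist P π ρ0 t s a)
      = ∑' t : ℕ, ∑ a : A, γ ^ t * saDist P π ρ0 t s a :=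
    fun s => (Summable.tsum_finsetSum (fun a _ => hsum s a)).symm
  have hS : (∑ s : S, ∑' t : ℕ, ∑ a : A, γ ^ t * saDist P π ρ0 t s a)
      = ∑' t : ℕ, ∑ s : S, ∑ a : A, γ ^ t * saDist P π ρ0 t s a :=
    (Summable.tsum_finsetSum (fun s _ => summable_sum (fun a _ => hsum s a))).symm
  have key : ∑ s : S, ∑ a : A, ∑' t : ℕ, γ ^ t * saDist P π ρ0 t s a
      = (1 - γ)⁻¹ := by
    rw [Finset.sum_congr rfl (fun s _ => hA s), hS]
    rw [show (∑' t : ℕ, ∑ s : S, ∑ a : A, γ ^ t * saDist P π ρ0 t s a)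
        = ∑' t : ℕ, γ ^ t from tsum_congr fun t => by
      simp only [← Finset.mul_sum]; rw [saDist_total hP hπ hρ0 t, mul_one]]
    exact tsum_geometric_of_lt_one hγ.1.le hγ.2
  unfold occ
  simp only [← Finset.mul_sum]
  rw [key, mul_inv_cancel₀ (by linarith [hγ.2] : (1:ℝ) - γ ≠ 0)]

lemma occ_flow {γ : ℝ} (hγ : γ ∈ Set.Ioo (0:ℝ) 1) {P : S → A → S → ℝ}
    {π : S → A → ℝ} {ρ0 : S → ℝ} (hP : IsKernel P) (hπ : IsPolicy π) (hρ0 : IsDist ρ0)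
    (s : S) : ∑ a, occ γ P π ρ0 s a
      = (1 - γ) * ρ0 s + γ * ∑ s' : S, ∑ a' : A, P s' a' s * occ γ P π ρ0 s' a' := by
  have hsum : ∀ s a, Summable (fun t => γ ^ t * saDist P π ρ0 t s a) :=
    fun s a => saDist_summable hγ hP hπ hρ0 s a
  have hm : ∀ s : S, Summable (fun t => γ ^ t * ∑ a, saDist P π ρ0 t s a) := by
    intro s
    refine (summable_sum (s := Finset.univ) (fun a _ => hsum s a)).congr fun t => ?_
    rw [Finset.mul_sum]
  have h1 : ∑ a, occ γ P π ρ0 s a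
      = (1 - γ) * ∑' t : ℕ, γ ^ t * ∑ a, saDist P π ρ0 t s a := by
    unfold occ
    rw [← Finset.mul_sum, ← Summable.tsum_finsetSum (fun a (_ : a ∈ Finset.univ) => hsum s a)]
    congr 1
    exact tsum_congr fun t => (Finset.mul_sum _ _ _).symm
  have h2 : ∑' t : ℕ, γ ^ (t+1) * ∑ a, saDist P π ρ0 (t+1) s a
      = γ * ∑ s' : S, ∑ a' : A, P s' a' s * ∑' t : ℕ, γ ^ t * saDist P π ρ0 t s' a' := by
    calc ∑' t : ℕ, γ ^ (t+1) * ∑ a, saDist P π ρ0 (t+1) s a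
        = ∑' t : ℕ, γ * ∑ s' : S, ∑ a' : A, P s' a' s * (γ ^ t * saDist P π ρ0 t s' a') := by
          refine tsum_congr fun t => ?_
          rw [saDist_marg_succ hπ t s, pow_succ]
          simp only [Finset.mul_sum]
          refine Finset.sum_congr rfl fun s' _ => Finset.sum_congr rfl fun a' _ => by ring
      _ = γ * ∑' t : ℕ, ∑ s' : S, ∑ a' : A, P s' a' s * (γ ^ t * saDist P π ρ0 t s' a') := by
          rw [tsum_mul_left]
      _ = γ * ∑ s' : S, ∑ a' : A, P s' a' s * ∑' t : ℕ, γ ^ t * saDist P π ρ0 t s' a' := by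
          congr 1
          rw [Summable.tsum_finsetSum (fun s' (_ : s' ∈ Finset.univ) =>
            summable_sum (fun a' (_ : a' ∈ Finset.univ) => (hsum s' a').mul_left _))]
          refine Finset.sum_congr rfl fun s' _ => ?_
          rw [Summable.tsum_finsetSum (fun a' (_ : a' ∈ Finset.univ) => (hsum s' a').mul_left _)]
          exact Finset.sum_congr rfl fun a' _ => tsum_mul_left
  rw [h1, (hm s).tsum_eq_zero_add]
  have h0 : γ ^ 0 * ∑ a, saDist P π ρ0 0 s a = ρ0 s := by
    simp only [saDist, pow_zero, one_mul, ← Finset.mul_sum, (hπ s).2, mul_one]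
  rw [h0, h2, mul_add]
  congr 1
  unfold occ
  simp only [Finset.mul_sum]
  refine Finset.sum_congr rfl fun s' _ => Finset.sum_congr rfl fun a' _ => by ring

lemma occE_mem_flow {γ : ℝ} (hγ : γ ∈ Set.Ioo (0:ℝ) 1) {P : S → A → S → ℝ}
    {π : S → A → ℝ} {ρ0 : S → ℝ} (hP : IsKernel P) (hπ : IsPolicy π) (hρ0 : IsDist ρ0) :
    occE γ P π ρ0 ∈ MflowE γ P ρ0 := by
  refine ⟨fun p => occ_nonneg hγ hP hπ hρ0 p.1 p.2, ?_, fun s => occ_flow hγ hP hπ hρ0 s⟩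
  rw [Fintype.sum_prod_type]
  exact occ_total hγ hP hπ hρ0

lemma flow_marg_unique {γ : ℝ} (hγ : γ ∈ Set.Ioo (0:ℝ) 1) (q : S → S → ℝ)
    (hq0 : ∀ s' s, 0 ≤ q s' s) (hq1 : ∀ s', ∑ s, q s' s = 1) (c : S → ℝ)
    (ρ1 ρ2 : S → ℝ)
    (h1 : ∀ s, ρ1 s = c s + γ * ∑ s', q s' s * ρ1 s')
    (h2 : ∀ s, ρ2 s = c s + γ * ∑ s', q s' s * ρ2 s') : ρ1 = ρ2 := by
  set δ : S → ℝ := fun s => ρ1 s - ρ2 s with hδ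
  have hfix : ∀ s, δ s = γ * ∑ s', q s' s * δ s' := by
    intro s
    simp only [hδ]
    rw [h1 s, h2 s]
    rw [show (∑ s', q s' s * (ρ1 s' - ρ2 s')) = (∑ s', q s' s * ρ1 s') - ∑ s', q s' s * ρ2 s' by
      rw [← Finset.sum_sub_distrib]; exact Finset.sum_congr rfl fun s' _ => by ring]
    ring
  have hkey : ∑ s, |δ s| ≤ γ * ∑ s, |δ s| := by
    calc ∑ s, |δ s| = ∑ s, |γ * ∑ s', q s' s * δ s'| := by
          exact Finset.sum_congr rfl fun s _ => by rw [← hfix s]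
      _ ≤ ∑ s, γ * ∑ s', q s' s * |δ s'| := by
          refine Finset.sum_le_sum fun s _ => ?_
          rw [abs_mul, abs_of_nonneg hγ.1.le]
          refine mul_le_mul_of_nonneg_left ?_ hγ.1.le
          calc |∑ s', q s' s * δ s'| ≤ ∑ s', |q s' s * δ s'| := Finset.abs_sum_le_sum_abs _ _
            _ = ∑ s', q s' s * |δ s'| := Finset.sum_congr rfl fun s' _ => by
                rw [abs_mul, abs_of_nonneg (hq0 s' s)]
      _ = γ * ∑ s', (∑ s, q s' s) * |δ s'| := by
          rw [← Finset.mul_sum, Finset.sum_comm]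
          congr 1
          exact Finset.sum_congr rfl fun s' _ => by rw [Finset.sum_mul]
      _ = γ * ∑ s, |δ s| := by
          congr 1
          exact Finset.sum_congr rfl fun s' _ => by rw [hq1 s', one_mul]
  have hnn : 0 ≤ ∑ s, |δ s| := Finset.sum_nonneg fun s _ => abs_nonneg _
  have hz : ∑ s, |δ s| = 0 := by nlinarith [hγ.2]
  funext s
  have := (Finset.sum_eq_zero_iff_of_nonneg (fun s _ => abs_nonneg (δ s))).1 hz s
    (Finset.mem_univ s)
  have : |δ s| = 0 := this
  have : δ s = 0 := abs_eq_zero.1 this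
  simpa [hδ, sub_eq_zero] using this

lemma flow_realizable [Nonempty A] {γ : ℝ} (hγ : γ ∈ Set.Ioo (0:ℝ) 1)
    {P : S → A → S → ℝ} {ρ0 : S → ℝ} (hP : IsKernel P) (hρ0 : IsDist ρ0)
    (μ : EuclideanSpace ℝ (S × A)) (hμ : μ ∈ MflowE γ P ρ0) :
    ∃ π : S → A → ℝ, IsPolicy π ∧ occE γ P π ρ0 = μ := by
  obtain ⟨hnn, hsum1, hflow⟩ := hμ
  set ρ : S → ℝ := fun s => ∑ a, μ (s, a) with hρ
  set π : S → A → ℝ := fun s a => if 0 < ρ s then μ (s, a) / ρ s else (Fintype.card A : ℝ)⁻¹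
    with hπdef
  have hcard : (0:ℝ) < (Fintype.card A : ℝ) := by
    exact_mod_cast Fintype.card_pos
  have hpol : IsPolicy π := by
    intro s
    by_cases h : 0 < ρ s
    · constructor
      · intro a; simp only [hπdef, if_pos h]
        exact div_nonneg (hnn (s, a)) h.le
      · simp only [hπdef, if_pos h]
        rw [← Finset.sum_div, show (∑ i : A, μ (s, i)) = ρ s from rfl, div_self h.ne']
    · constructor
      · intro a; simp only [hπdef, if_neg h]
        positivity
      · simp only [hπdef, if_neg h, Finset.sum_const, Finset.card_univ, nsmul_eq_mul]
        rw [mul_inv_cancel₀ hcard.ne']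
  have hfac : ∀ s a, μ (s, a) = ρ s * π s a := by
    intro s a
    by_cases h : 0 < ρ s
    · simp only [hπdef, if_pos h]
      field_simp
    · have hz : ρ s = 0 := le_antisymm (not_lt.1 h) (Finset.sum_nonneg fun a _ => hnn (s, a))
      have : μ (s, a) = 0 := by
        have := (Finset.sum_eq_zero_iff_of_nonneg (fun a _ => hnn (s, a))).1 hz a
          (Finset.mem_univ a)
        exact this
      rw [this, hz, zero_mul]
  refine ⟨π, hpol, ?_⟩
  -- state marginals coincide by uniqueness
  set q : S → S → ℝ := fun s' s => ∑ a, π s' a * P s' a s with hq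
  have hq0 : ∀ s' s, 0 ≤ q s' s := fun s' s =>
    Finset.sum_nonneg fun a _ => mul_nonneg ((hpol s').1 a) ((hP s' a).1 s)
  have hq1 : ∀ s', ∑ s, q s' s = 1 := by
    intro s'
    rw [Finset.sum_comm]
    calc ∑ a, ∑ s, π s' a * P s' a s = ∑ a, π s' a * ∑ s, P s' a s := by
          exact Finset.sum_congr rfl fun a _ => (Finset.mul_sum _ _ _).symm
      _ = ∑ a, π s' a := Finset.sum_congr rfl fun a _ => by rw [(hP s' a).2, mul_one]
      _ = 1 := (hpol s').2
  have hρeq1 : ∀ s, ρ s = (1 - γ) * ρ0 s + γ * ∑ s', q s' s * ρ s' := by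
    intro s
    rw [show ρ s = ∑ a, μ (s, a) from rfl, hflow s]
    congr 1
    congr 1
    refine Finset.sum_congr rfl fun s' _ => ?_
    rw [show q s' s = ∑ a, π s' a * P s' a s from rfl, Finset.sum_mul]
    refine Finset.sum_congr rfl fun a' _ => ?_
    rw [hfac s' a']; ring
  set ρocc : S → ℝ := fun s => ∑ a, occ γ P π ρ0 s a with hρocc
  have hρeq2 : ∀ s, ρocc s = (1 - γ) * ρ0 s + γ * ∑ s', q s' s * ρocc s' := by
    intro s
    rw [show ρocc s = ∑ a, occ γ P π ρ0 s a from rfl, occ_flow hγ hP hpol hρ0 s]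
    congr 1
    congr 1
    refine Finset.sum_congr rfl fun s' _ => ?_
    rw [show q s' s = ∑ a, π s' a * P s' a s from rfl, Finset.sum_mul]
    refine Finset.sum_congr rfl fun a' _ => ?_
    rw [occ_factor hγ hP hpol hρ0 s' a']; ring
  have huniq : ρocc = ρ :=
    flow_marg_unique hγ q hq0 hq1 (fun s => (1 - γ) * ρ0 s) ρocc ρ hρeq2 hρeq1
  ext p
  obtain ⟨s, a⟩ := p
  show occ γ P π ρ0 s a = μ (s, a)
  rw [occ_factor hγ hP hpol hρ0 s a, hfac s a,
    show (∑ b, occ γ P π ρ0 s b) = ρocc s from rfl, huniq]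
  ring

open Topology in
/-- Directional derivative of `G` along the segment from `x` towards `y`. -/
lemma line_hasDerivAt {E : Type*} [NormedAddCommGroup E] [InnerProductSpace ℝ E]
    [CompleteSpace E] {G : E → ℝ} {x : E} {gx : E} (h : HasGradientAt G gx x) (d : E) :
    HasDerivAt (fun t : ℝ => G (x + t • d)) ⟪gx, d⟫ 0 := by
  have hline : HasDerivAt (fun t : ℝ => x + t • d) d 0 := by
    simpa using ((hasDerivAt_id (0:ℝ)).smul_const d).const_add x
  have hF : HasFDerivAt G (InnerProductSpace.toDual ℝ E gx) x := h.hasFDerivAt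
  have hx0 : x + (0:ℝ) • d = x := by simp
  have hF' : HasFDerivAt G (InnerProductSpace.toDual ℝ E gx) ((fun t : ℝ => x + t • d) 0) := by
    simpa using hF
  have hcomp := hF'.comp_hasDerivAt (0:ℝ) hline
  simpa [InnerProductSpace.toDual_apply_apply, Function.comp_def] using hcomp

open Topology in
/-- If for all small positive `t` the slope of `φ` at `0` is `≥ K` (resp. `≤ K`)
and `φ` has derivative `D` at `0`, then `K ≤ D` (resp. `D ≤ K`). -/
lemma deriv_ge_of_slope_ge {φ : ℝ → ℝ} {D K : ℝ} (hD : HasDerivAt φ D 0)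
    (h : ∀ t ∈ Set.Ioc (0:ℝ) 1, K ≤ (φ t - φ 0) / t) : K ≤ D := by
  have htend : Filter.Tendsto (slope φ 0) (𝓝[>] (0:ℝ)) (𝓝 D) :=
    (hasDerivAt_iff_tendsto_slope.1 hD).mono_left
      (nhdsWithin_mono _ (fun t ht => ne_of_gt ht))
  refine ge_of_tendsto htend ?_
  filter_upwards [Ioc_mem_nhdsGT (zero_lt_one)] with t ht
  have := h t ht
  rw [show slope φ 0 t = (φ t - φ 0) / (t - 0) from slope_def_field φ 0 t, sub_zero]
  exact this
  
open Topology in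
lemma deriv_le_of_slope_le {φ : ℝ → ℝ} {D K : ℝ} (hD : HasDerivAt φ D 0)
    (h : ∀ t ∈ Set.Ioc (0:ℝ) 1, (φ t - φ 0) / t ≤ K) : D ≤ K := by
  have := deriv_ge_of_slope_ge (K := -K) (hD.neg) (fun t ht => ?_)
  · linarith
  · have := h t ht
    have ht0 : 0 < t := ht.1
    rw [show ((-φ) t - (-φ) 0) / t = -((φ t - φ 0)/t) by simp only [Pi.neg_apply]; ring]
    linarith

/-- First-order characterization (one direction) for concave functions. -/
lemma concave_grad_ineq {E : Type*} [NormedAddCommGroup E] [InnerProductSpace ℝ E]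
    [CompleteSpace E] {C : Set E} {G : E → ℝ} (hG : ConcaveOn ℝ C G)
    {x y : E} (hx : x ∈ C) (hy : y ∈ C) {gx : E} (h : HasGradientAt G gx x) :
    G y ≤ G x + ⟪gx, y - x⟫ := by
  set d := y - x with hd
  set φ : ℝ → ℝ := fun t => G (x + t • d) with hφ
  have hderiv : HasDerivAt φ ⟪gx, d⟫ 0 := line_hasDerivAt h d
  have hslope : ∀ t ∈ Set.Ioc (0:ℝ) 1, G y - G x ≤ (φ t - φ 0) / t := by
    intro t ht
    have hcomb := hG.2 hx hy (by linarith [ht.2] : (0:ℝ) ≤ 1 - t) ht.1.le (by ring)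
    have hxt : (1 - t) • x + t • y = x + t • d := by
      rw [hd]; module
    have hφt : (1 - t) * G x + t * G y ≤ φ t := by
      rw [hφ]; simpa [hxt] using hcomb
    have hφ0 : φ 0 = G x := by simp [hφ]
    rw [hφ0, le_div_iff₀ ht.1]
    nlinarith [hφt]
  have := deriv_ge_of_slope_ge hderiv hslope
  linarith

lemma MflowE_convex_comb {γ : ℝ} {P : S → A → S → ℝ} {ρ0 : S → ℝ}
    {μ ν : EuclideanSpace ℝ (S × A)} (hμ : μ ∈ MflowE γ P ρ0) (hν : ν ∈ MflowE γ P ρ0)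
    {t : ℝ} (ht0 : 0 ≤ t) (ht1 : t ≤ 1) :
    (WithLp.toLp 2 (fun p => (1 - t) * μ p + t * ν p) : EuclideanSpace ℝ (S × A)) ∈ MflowE γ P ρ0 := by
  obtain ⟨hμ0, hμ1, hμf⟩ := hμ
  obtain ⟨hν0, hν1, hνf⟩ := hν
  refine ⟨fun p => add_nonneg (mul_nonneg (by linarith) (hμ0 p)) (mul_nonneg ht0 (hν0 p)), ?_, ?_⟩
  · simp only [WithLp.ofLp_toLp]
    rw [Finset.sum_add_distrib, ← Finset.mul_sum, ← Finset.mul_sum, hμ1, hν1]; ring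
  · intro s
    simp only [WithLp.ofLp_toLp]
    rw [Finset.sum_add_distrib, ← Finset.mul_sum, ← Finset.mul_sum, hμf s, hνf s]
    rw [show (∑ s' : S, ∑ a' : A, P s' a' s * ((1 - t) * μ (s', a') + t * ν (s', a')))
        = (1 - t) * (∑ s' : S, ∑ a' : A, P s' a' s * μ (s', a'))
          + t * (∑ s' : S, ∑ a' : A, P s' a' s * ν (s', a')) by
      simp only [Finset.mul_sum, ← Finset.sum_add_distrib]
      exact Finset.sum_congr rfl fun s' _ => Finset.sum_congr rfl fun a' _ => by ring]
    ring

lemma marg_mem_simplex {γ : ℝ} {P : S → A → S → ℝ} {ρ0 : S → ℝ}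
    {μ : EuclideanSpace ℝ (S × A)} (hμ : μ ∈ MflowE γ P ρ0) :
    (margE μ).ofLp ∈ stdSimplex ℝ S := by
  obtain ⟨hμ0, hμ1, -⟩ := hμ
  constructor
  · intro s; exact Finset.sum_nonneg fun a _ => hμ0 (s, a)
  · rw [show (∑ s, margE μ s) = ∑ s : S, ∑ a : A, μ (s, a) from rfl, ← Fintype.sum_prod_type]
    exact hμ1

end Lemmas

/-- Separable case: for `F(μ) = ⟨μ, r⟩ + G(ρ)` with `G` differentiable and
concave, and MFG reward `R(s,a,ρ) = r(s,a) + ∇G(ρ)(s)`, a policy `π` maximizes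
`F(μ_π)` over all policies iff it is a Nash equilibrium of the MFG, i.e.
`J(π', ρ_π) ≤ J(π, ρ_π)` for all policies `π'`, where
`J(π', ρ) = ⟨μ_{π'}, R(·,·,ρ)⟩`. -/
theorem stmt10 {S A : Type*} [Fintype S] [Fintype A] [Nonempty S] [Nonempty A]
    (γ : ℝ) (hγ : γ ∈ Set.Ioo (0 : ℝ) 1)
    (P : S → A → S → ℝ) (hP : IsKernel P)
    (ρ0 : S → ℝ) (hρ0 : IsDist ρ0)
    (r : S → A → ℝ)
    (G : EuclideanSpace ℝ S → ℝ) (g : EuclideanSpace ℝ S → EuclideanSpace ℝ S)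
    (hG : ConcaveOn ℝ (WithLp.ofLp ⁻¹' stdSimplex ℝ S) G)
    (hgrad : ∀ ρ ∈ stdSimplex ℝ S, HasGradientAt G (g (WithLp.toLp 2 ρ)) (WithLp.toLp 2 ρ))
    (π : S → A → ℝ) (hπ : IsPolicy π) :
    (∀ π' : S → A → ℝ, IsPolicy π' →
        (∑ s : S, ∑ a : A, occ γ P π' ρ0 s a * r s a) + G (margE (occE γ P π' ρ0))
          ≤ (∑ s : S, ∑ a : A, occ γ P π ρ0 s a * r s a) + G (margE (occE γ P π ρ0))) ↔
    (∀ π' : S → A → ℝ, IsPolicy π' →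
        (∑ s : S, ∑ a : A, occ γ P π' ρ0 s a * (r s a + g (margE (occE γ P π ρ0)) s))
          ≤ ∑ s : S, ∑ a : A, occ γ P π ρ0 s a * (r s a + g (margE (occE γ P π ρ0)) s)) := by
  have hμπM : occE γ P π ρ0 ∈ MflowE γ P ρ0 := occE_mem_flow hγ hP hπ hρ0
  set μπ : EuclideanSpace ℝ (S × A) := occE γ P π ρ0 with hμπ
  set ρπ : EuclideanSpace ℝ S := margE μπ with hρπ
  have hρπS : ρπ.ofLp ∈ stdSimplex ℝ S := marg_mem_simplex hμπM
  -- chain rule identity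
  have chain : ∀ (ν : EuclideanSpace ℝ (S × A)),
      (∑ s : S, ∑ a : A, ν (s, a) * (r s a + g ρπ s))
        = (∑ s : S, ∑ a : A, ν (s, a) * r s a) + ∑ s : S, margE ν s * g ρπ s := by
    intro ν
    rw [← Finset.sum_add_distrib]
    refine Finset.sum_congr rfl fun s _ => ?_
    rw [show margE ν s = ∑ a, ν (s, a) from rfl, Finset.sum_mul, ← Finset.sum_add_distrib]
    exact Finset.sum_congr rfl fun a _ => by ring
  have inner_eq : ∀ v : EuclideanSpace ℝ S, ⟪g ρπ, v⟫ = ∑ s, g ρπ s * v s := by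
    intro v
    simp [PiLp.inner_apply, RCLike.inner_apply, map_sum, mul_comm]
  have hoccE : ∀ (π' : S → A → ℝ) (s : S) (a : A),
      occ γ P π' ρ0 s a = occE γ P π' ρ0 (s, a) := fun _ _ _ => rfl
  constructor
  · -- maximizer → Nash
    intro hmax π' hπ'
    have hμ'M : occE γ P π' ρ0 ∈ MflowE γ P ρ0 := occE_mem_flow hγ hP hπ' hρ0
    set μ' : EuclideanSpace ℝ (S × A) := occE γ P π' ρ0 with hμ'
    set ρ' : EuclideanSpace ℝ S := margE μ' with hρ'
    set d : EuclideanSpace ℝ S := ρ' - ρπ with hdd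
    set K : ℝ := (∑ s : S, ∑ a : A, μπ (s, a) * r s a)
      - ∑ s : S, ∑ a : A, μ' (s, a) * r s a with hK
    have hderiv : HasDerivAt (fun t : ℝ => G (ρπ + t • d)) ⟪g ρπ, d⟫ 0 :=
      line_hasDerivAt (hgrad ρπ.ofLp hρπS) d
    have hslope : ∀ t ∈ Set.Ioc (0:ℝ) 1,
        (G (ρπ + t • d) - G (ρπ + (0:ℝ) • d)) / t ≤ K := by
      intro t ht
      have hμtM := MflowE_convex_comb hμπM hμ'M ht.1.le ht.2
      obtain ⟨πt, hπt, hπteq⟩ := flow_realizable hγ hP hρ0 _ hμtM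
      have hocc_t : ∀ s a, occ γ P πt ρ0 s a = (1 - t) * μπ (s, a) + t * μ' (s, a) :=
        fun s a => congrArg (fun v : EuclideanSpace ℝ (S × A) => v (s, a)) hπteq
      have hmarg_t : margE (occE γ P πt ρ0) = ρπ + t • d := by
        ext s
        rw [show margE (occE γ P πt ρ0) s = ∑ a, occ γ P πt ρ0 s a from rfl]
        simp only [hocc_t, Finset.sum_add_distrib, ← Finset.mul_sum]
        rw [show (ρπ + t • d) s = ρπ s + t * d s from rfl,
          show d s = ρ' s - ρπ s from rfl,
          show ρ' s = ∑ a, μ' (s, a) from rfl, show ρπ s = ∑ a, μπ (s, a) from rfl]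
        ring
      have hb := hmax πt hπt
      rw [hmarg_t] at hb
      have hr_t : ∑ s : S, ∑ a : A, occ γ P πt ρ0 s a * r s a
          = (1 - t) * (∑ s : S, ∑ a : A, μπ (s, a) * r s a)
            + t * ∑ s : S, ∑ a : A, μ' (s, a) * r s a := by
        simp only [hocc_t, Finset.mul_sum, ← Finset.sum_add_distrib]
        exact Finset.sum_congr rfl fun s _ => Finset.sum_congr rfl fun a _ => by ring
      rw [div_le_iff₀ ht.1]
      have h0 : ρπ + (0:ℝ) • d = ρπ := by simp
      rw [h0]
      have hπr : (∑ s : S, ∑ a : A, occ γ P π ρ0 s a * r s a)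
          = ∑ s : S, ∑ a : A, μπ (s, a) * r s a := rfl
      rw [hπr] at hb
      rw [hr_t] at hb
      rw [hK]
      nlinarith [hb]
    have hDle : ⟪g ρπ, d⟫ ≤ K := deriv_le_of_slope_le hderiv (by
      intro t ht
      have := hslope t ht
      simpa using this)
    rw [inner_eq d] at hDle
    have hged : ∑ s, g ρπ s * d s = (∑ s, g ρπ s * ρ' s) - ∑ s, g ρπ s * ρπ s := by
      rw [← Finset.sum_sub_distrib]
      refine Finset.sum_congr rfl fun s _ => ?_
      rw [show d s = ρ' s - ρπ s from rfl]; ring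
    rw [hged] at hDle
    have e1 : (∑ s : S, ∑ a : A, occ γ P π' ρ0 s a * (r s a + g ρπ s))
        = (∑ s : S, ∑ a : A, μ' (s, a) * r s a) + ∑ s : S, margE μ' s * g ρπ s := chain μ'
    have e2 : (∑ s : S, ∑ a : A, occ γ P π ρ0 s a * (r s a + g ρπ s))
        = (∑ s : S, ∑ a : A, μπ (s, a) * r s a) + ∑ s : S, margE μπ s * g ρπ s := chain μπ
    rw [e1, e2]
    have c1 : ∑ s : S, margE μ' s * g ρπ s = ∑ s, g ρπ s * ρ' s :=
      Finset.sum_congr rfl fun s _ => by rw [show margE μ' s = ρ' s from rfl]; ring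
    have c2 : ∑ s : S, margE μπ s * g ρπ s = ∑ s, g ρπ s * ρπ s :=
      Finset.sum_congr rfl fun s _ => by rw [show margE μπ s = ρπ s from rfl]; ring
    rw [c1, c2]
    rw [hK] at hDle
    linarith
  · -- Nash → maximizer
    intro hnash π' hπ'
    have hμ'M : occE γ P π' ρ0 ∈ MflowE γ P ρ0 := occE_mem_flow hγ hP hπ' hρ0
    set μ' : EuclideanSpace ℝ (S × A) := occE γ P π' ρ0 with hμ'
    set ρ' : EuclideanSpace ℝ S := margE μ' with hρ'
    have hρ'S : ρ'.ofLp ∈ stdSimplex ℝ S := marg_mem_simplex hμ'M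
    have hconc : G ρ' ≤ G ρπ + ⟪g ρπ, ρ' - ρπ⟫ :=
      concave_grad_ineq hG hρπS hρ'S (hgrad ρπ.ofLp hρπS)
    rw [inner_eq] at hconc
    have hged : ∑ s, g ρπ s * (ρ' - ρπ) s = (∑ s, g ρπ s * ρ' s) - ∑ s, g ρπ s * ρπ s := by
      rw [← Finset.sum_sub_distrib]
      refine Finset.sum_congr rfl fun s _ => ?_
      rw [show (ρ' - ρπ) s = ρ' s - ρπ s from rfl]; ring
    rw [hged] at hconc
    have hb := hnash π' hπ'
    have d1 : (∑ s : S, ∑ a : A, occ γ P π' ρ0 s a * (r s a + g ρπ s))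
        = (∑ s : S, ∑ a : A, occ γ P π' ρ0 s a * r s a) + ∑ s : S, margE μ' s * g ρπ s :=
      chain μ'
    have d2 : (∑ s : S, ∑ a : A, occ γ P π ρ0 s a * (r s a + g ρπ s))
        = (∑ s : S, ∑ a : A, occ γ P π ρ0 s a * r s a) + ∑ s : S, margE μπ s * g ρπ s :=
      chain μπ
    rw [d1, d2] at hb
    have c1 : ∑ s : S, margE μ' s * g ρπ s = ∑ s, g ρπ s * ρ' s :=
      Finset.sum_congr rfl fun s _ => by rw [show margE μ' s = ρ' s from rfl]; ring
    have c2 : ∑ s : S, margE μπ s * g ρπ s = ∑ s, g ρπ s * ρπ s :=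
      Finset.sum_congr rfl fun s _ => by rw [show margE μπ s = ρπ s from rfl]; ring
    rw [c1, c2] at hb
    linarith
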